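/- arXiv:2206.15008 — 3 statements merged into one kernel-verified Lean document; each statement's English description precedes it below -/
import Mathlib

section
/- Let Ω > 0 and K ≥ 0, let F : [0,∞) → ℝ be measurable with |F(s)| ≤ K⟨s⟩^{−2} for all s ≥ 0, let a₀ ∈ ℝ, and define a(t) = e^{−Ωt} [ a₀ + (1/(2Ω)) ∫₀^∞ e^{−Ωs} F(s) ds ] − (1/(2Ω)) ∫₀^∞ e^{−Ω|t−s|} F(s) ds for t ≥ 0. Then there exists a constant C depending only on Ω such that ⟨t⟩² |a(t)| ≤ C (|a₀| + K) for all t ≥ 0. -/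
open MeasureTheory Set Real

/-- Integral of `exp (-(c*s))` over `Ioi a`. -/
private lemma exp_int_Ioi {c : ℝ} (hc : 0 < c) (a : ℝ) :
    ∫ s in Set.Ioi a, Real.exp (-(c * s)) = Real.exp (-(c * a)) / c := by
  have h := MeasureTheory.integral_comp_mul_left_Ioi (fun x => Real.exp (-x)) a hc
  simp only [smul_eq_mul] at h
  rw [h, integral_exp_neg_Ioi]
  ring

/-- The kernel `exp (-(c*|t-s|))` is integrable on `Ioi 0`. -/
private lemma ker_integrable {c : ℝ} (hc : 0 < c) (t : ℝ) :
    IntegrableOn (fun s => Real.exp (-(c * |t - s|))) (Set.Ioi 0) := by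
  have hbase : IntegrableOn (fun s => Real.exp (c * t) * Real.exp (-(c * s))) (Set.Ioi 0) := by
    have := (exp_neg_integrableOn_Ioi 0 hc).const_mul (Real.exp (c * t))
    simpa [neg_mul, IntegrableOn] using this
  refine hbase.mono' ?_ ?_
  · exact (Real.measurable_exp.comp
      (((measurable_const.sub measurable_id).abs.const_mul c).neg)).aestronglyMeasurable
  · filter_upwards with s
    rw [Real.norm_eq_abs, abs_of_pos (Real.exp_pos _), ← Real.exp_add]
    apply Real.exp_le_exp.2
    have h1 : -|t - s| ≤ t - s := neg_abs_le _
    nlinarith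

/-- The kernel integral is bounded by `2 / c`, uniformly in `t ≥ 0`. -/
private lemma ker_int_bound {c : ℝ} (hc : 0 < c) {t : ℝ} (ht : 0 ≤ t) :
    ∫ s in Set.Ioi 0, Real.exp (-(c * |t - s|)) ≤ 2 / c := by
  have hint := ker_integrable hc t
  have hsplit : (Set.Ioc (0:ℝ) t) ∪ (Set.Ioi t) = Set.Ioi 0 := Set.Ioc_union_Ioi_eq_Ioi ht
  have h1 : IntegrableOn (fun s => Real.exp (-(c * |t - s|))) (Set.Ioc 0 t) :=
    hint.mono_set (by rw [← hsplit]; exact Set.subset_union_left)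
  have h2 : IntegrableOn (fun s => Real.exp (-(c * |t - s|))) (Set.Ioi t) :=
    hint.mono_set (by rw [← hsplit]; exact Set.subset_union_right)
  rw [← hsplit, MeasureTheory.setIntegral_union (Set.Ioc_disjoint_Ioi le_rfl)
    measurableSet_Ioi h1 h2]
  have hA : ∫ s in Set.Ioc 0 t, Real.exp (-(c * |t - s|)) ≤ 1 / c := by
    have he : ∀ s ∈ Set.Ioc (0:ℝ) t, Real.exp (-(c * |t - s|))
        = Real.exp (-(c * (t - s))) := by
      intro s hs
      rw [abs_of_nonneg (by linarith [hs.2])]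
    rw [MeasureTheory.setIntegral_congr_fun measurableSet_Ioc he,
      ← intervalIntegral.integral_of_le ht]
    have hcs : (∫ x in (0:ℝ)..t, Real.exp (-(c * (t - x))))
        = ∫ x in (0:ℝ)..t, Real.exp (-(c * x)) := by
      have := intervalIntegral.integral_comp_sub_left (fun u => Real.exp (-(c * u))) t
        (a := 0) (b := t)
      simpa using this
    rw [hcs, intervalIntegral.integral_of_le ht]
    calc (∫ x in Set.Ioc (0:ℝ) t, Real.exp (-(c * x)))
        ≤ ∫ x in Set.Ioi (0:ℝ), Real.exp (-(c * x)) := by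
          apply MeasureTheory.setIntegral_mono_set
          · simpa [neg_mul] using exp_neg_integrableOn_Ioi 0 hc
          · filter_upwards with x using (Real.exp_pos _).le
          · filter_upwards with x hx using Set.Ioc_subset_Ioi_self hx
      _ = 1 / c := by rw [exp_int_Ioi hc]; simp
  have hB : ∫ s in Set.Ioi t, Real.exp (-(c * |t - s|)) = 1 / c := by
    have he : ∀ s ∈ Set.Ioi t, Real.exp (-(c * |t - s|))
        = Real.exp (c * t) * Real.exp (-(c * s)) := by
      intro s hs
      rw [abs_of_nonpos (by simp at hs; linarith), ← Real.exp_add]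
      ring_nf
    rw [MeasureTheory.setIntegral_congr_fun measurableSet_Ioi he,
      MeasureTheory.integral_const_mul, exp_int_Ioi hc, ← mul_div_assoc, ← Real.exp_add]
    simp
  calc (∫ s in Set.Ioc 0 t, Real.exp (-(c * |t - s|)))
        + ∫ s in Set.Ioi t, Real.exp (-(c * |t - s|))
      ≤ 1 / c + 1 / c := add_le_add hA hB.le
    _ = 2 / c := by ring

/-- `(1+u²) e^{-cu} ≤ 1 + 4/c²` for `u ≥ 0`. -/
private lemma poly_exp {c : ℝ} (hc : 0 < c) {u : ℝ} (hu : 0 ≤ u) :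
    (1 + u ^ 2) * Real.exp (-(c * u)) ≤ 1 + 4 / c ^ 2 := by
  have hcu : 0 ≤ c * u := mul_nonneg hc.le hu
  have h1 : Real.exp (-(c * u)) ≤ 1 := Real.exp_le_one_iff.2 (by linarith)
  have hmul : Real.exp (-(c * u)) * Real.exp (c * u) = 1 := by
    rw [← Real.exp_add]; simp
  have h2 : c ^ 2 * u ^ 2 / 4 ≤ Real.exp (c * u) := by
    have ha := Real.add_one_le_exp (c * u / 2)
    have hb : Real.exp (c * u / 2) * Real.exp (c * u / 2) = Real.exp (c * u) := by
      rw [← Real.exp_add]; ring_nf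
    nlinarith [Real.exp_pos (c * u / 2)]
  have hcp : (0:ℝ) < c ^ 2 := by positivity
  have h3 : u ^ 2 * Real.exp (-(c * u)) ≤ 4 / c ^ 2 := by
    have he := Real.exp_pos (-(c * u))
    have hfield : 4 / c ^ 2 * c ^ 2 = 4 := by field_simp
    nlinarith [mul_le_mul_of_nonneg_left h2 he.le]
  nlinarith [Real.exp_pos (-(c * u))]

set_option maxHeartbeats 1600000

/-- Quantitative `⟨t⟩⁻²` decay of the discrete mode: there is a constant `C`
depending only on `Ω` such that if `|F(s)| ≤ K ⟨s⟩⁻²` for `s ≥ 0` and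
`a(t) = e^{−Ωt} [a₀ + (1/(2Ω)) ∫₀^∞ e^{−Ωs} F(s) ds]
        − (1/(2Ω)) ∫₀^∞ e^{−Ω|t−s|} F(s) ds`,
then `⟨t⟩² |a(t)| ≤ C (|a₀| + K) ` for all `t ≥ 0`. Here `⟨t⟩² = 1 + t²`. -/
theorem stmt5 (Ω : ℝ) (hΩ : 0 < Ω) :
    ∃ C : ℝ, ∀ K : ℝ, 0 ≤ K → ∀ F : ℝ → ℝ, Measurable F →
      (∀ s : ℝ, 0 ≤ s → |F s| ≤ K / (1 + s ^ 2)) →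
      ∀ a₀ : ℝ, ∀ t : ℝ, 0 ≤ t →
        (1 + t ^ 2) *
          |Real.exp (-Ω * t) *
              (a₀ + (1 / (2 * Ω)) * ∫ s in Set.Ioi (0 : ℝ), Real.exp (-Ω * s) * F s)
            - (1 / (2 * Ω)) * ∫ s in Set.Ioi (0 : ℝ), Real.exp (-Ω * |t - s|) * F s|
          ≤ C * (|a₀| + K) := by
  have hΩ2 : (0:ℝ) < Ω ^ 2 := by positivity
  have hc2 : (0:ℝ) < Ω / 2 := half_pos hΩ
  set M : ℝ := 1 + 4 / (Ω / 2) ^ 2 with hM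
  set B : ℝ := 1 + 4 / Ω ^ 2 with hB
  clear_value M B
  have hM0 : (0:ℝ) < M := by rw [hM]; positivity
  have hB0 : (0:ℝ) < B := by rw [hB]; positivity
  refine ⟨B * (1 + 1 / (2 * Ω ^ 2)) + (2 / Ω) * (4 / Ω) * M, ?_⟩
  intro K hK F hF hFb a₀ t ht
  have hc0 : (0:ℝ) < 1 / (2 * Ω) := by positivity
  have hP0 : (0:ℝ) < 1 + t ^ 2 := by positivity
  set I₁ : ℝ := ∫ s in Set.Ioi (0 : ℝ), Real.exp (-Ω * s) * F s with hI₁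
  set I₂ : ℝ := ∫ s in Set.Ioi (0 : ℝ), Real.exp (-Ω * |t - s|) * F s with hI₂
  clear_value I₁ I₂
  -- bound on I₁
  have hI1b : |I₁| ≤ K / Ω := by
    rw [hI₁]
    have hgint : Integrable (fun s => K * Real.exp (-(Ω * s)))
        (volume.restrict (Set.Ioi (0:ℝ))) := by
      have := (exp_neg_integrableOn_Ioi 0 hΩ).const_mul K
      simpa [neg_mul] using this
    have hae : ∀ᵐ s ∂(volume.restrict (Set.Ioi (0:ℝ))),
        ‖Real.exp (-Ω * s) * F s‖ ≤ K * Real.exp (-(Ω * s)) := by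
      filter_upwards [MeasureTheory.self_mem_ae_restrict measurableSet_Ioi] with s hs
      rw [Real.norm_eq_abs, abs_mul, abs_of_pos (Real.exp_pos _)]
      have hFs : |F s| ≤ K := by
        refine (hFb s (le_of_lt hs)).trans ?_
        have hs2 : (1:ℝ) ≤ 1 + s ^ 2 := by nlinarith
        calc K / (1 + s ^ 2) ≤ K / 1 := by
              apply div_le_div_of_nonneg_left hK (by linarith) hs2
          _ = K := by ring
      rw [show -Ω * s = -(Ω * s) by ring]
      nlinarith [abs_nonneg (F s), (Real.exp_pos (-(Ω * s))).le,
        mul_le_mul_of_nonneg_left hFs (Real.exp_pos (-(Ω * s))).le]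
    have h := MeasureTheory.norm_integral_le_of_norm_le hgint hae
    rw [Real.norm_eq_abs] at h
    refine h.trans ?_
    rw [MeasureTheory.integral_const_mul, exp_int_Ioi hΩ]
    simp [div_eq_mul_inv]
  -- bound on I₂
  have hI2b : |I₂| ≤ (2 * K * M / (1 + t ^ 2)) * (4 / Ω) := by
    rw [hI₂]
    have hD0 : (0:ℝ) ≤ 2 * K * M / (1 + t ^ 2) := by positivity
    have hgint : Integrable
        (fun s => (2 * K * M / (1 + t ^ 2)) * Real.exp (-(Ω / 2 * |t - s|)))
        (volume.restrict (Set.Ioi (0:ℝ))) :=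
      (ker_integrable hc2 t).const_mul _
    have hae : ∀ᵐ s ∂(volume.restrict (Set.Ioi (0:ℝ))),
        ‖Real.exp (-Ω * |t - s|) * F s‖
          ≤ (2 * K * M / (1 + t ^ 2)) * Real.exp (-(Ω / 2 * |t - s|)) := by
      filter_upwards [MeasureTheory.self_mem_ae_restrict measurableSet_Ioi] with s hs
      set u : ℝ := |t - s| with hu
      have hu0 : 0 ≤ u := abs_nonneg _
      have hFs : |F s| ≤ K / (1 + s ^ 2) := hFb s (le_of_lt hs)
      have hFs' : |F s| * (1 + s ^ 2) ≤ K := by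
        rw [div_eq_mul_inv] at hFs
        have h2 : (0:ℝ) < 1 + s ^ 2 := by positivity
        calc |F s| * (1 + s ^ 2) ≤ (K * (1 + s ^ 2)⁻¹) * (1 + s ^ 2) :=
              mul_le_mul_of_nonneg_right hFs h2.le
          _ = K := by field_simp
      have hp : (1 + u ^ 2) * Real.exp (-(Ω / 2 * u)) ≤ M := by
        rw [hM]; exact poly_exp hc2 hu0
      have hq : 1 + t ^ 2 ≤ 2 * (1 + u ^ 2) * (1 + s ^ 2) := by
        have habs2 : u ^ 2 = (t - s) ^ 2 := sq_abs _
        nlinarith [sq_nonneg (t - 2 * s), sq_nonneg (s * (t - s))]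
      set e : ℝ := Real.exp (-(Ω / 2 * u)) with he
      have he0 : (0:ℝ) < e := Real.exp_pos _
      have hsplit : Real.exp (-Ω * u) = e * e := by
        rw [he, ← Real.exp_add]; ring_nf
      rw [Real.norm_eq_abs, abs_mul, abs_of_pos (Real.exp_pos _), hsplit,
        div_mul_eq_mul_div, le_div_iff₀ hP0]
      -- goal : e * e * |F s| * (1 + t ^ 2) ≤ 2 * K * M * e
      have h1 : e * |F s| * (1 + t ^ 2) ≤ e * |F s| * (2 * (1 + u ^ 2) * (1 + s ^ 2)) :=
        mul_le_mul_of_nonneg_left hq (mul_nonneg he0.le (abs_nonneg _))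
      have h2 : ((1 + u ^ 2) * e) * (|F s| * (1 + s ^ 2)) ≤ M * K := by
        apply mul_le_mul hp hFs' (by positivity) hM0.le
      nlinarith [mul_le_mul_of_nonneg_left h1 he0.le,
        mul_le_mul_of_nonneg_left h2 (by positivity : (0:ℝ) ≤ 2 * e),
        mul_pos he0 he0, abs_nonneg (F s)]
    have h := MeasureTheory.norm_integral_le_of_norm_le hgint hae
    rw [Real.norm_eq_abs] at h
    refine h.trans ?_
    rw [MeasureTheory.integral_const_mul]
    have hk := ker_int_bound hc2 ht
    have h42 : 2 / (Ω / 2) = 4 / Ω := by field_simp; ring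
    rw [h42] at hk
    exact mul_le_mul_of_nonneg_left hk hD0
  -- triangle inequality
  have habs : |Real.exp (-Ω * t) * (a₀ + (1 / (2 * Ω)) * I₁) - (1 / (2 * Ω)) * I₂|
      ≤ Real.exp (-Ω * t) * (|a₀| + (1 / (2 * Ω)) * |I₁|) + (1 / (2 * Ω)) * |I₂| := by
    rw [sub_eq_add_neg]
    refine (abs_add_le _ _).trans ?_
    rw [abs_neg, abs_mul, abs_mul, abs_of_pos (Real.exp_pos _), abs_of_pos hc0]
    gcongr
    refine (abs_add_le _ _).trans ?_
    rw [abs_mul, abs_of_pos hc0]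
  -- assemble
  have hEP : (1 + t ^ 2) * Real.exp (-Ω * t) ≤ B := by
    have h := poly_exp hΩ ht
    rw [hB, show -Ω * t = -(Ω * t) by ring]
    exact h
  have hPI2 : (1 + t ^ 2) * |I₂| ≤ 2 * K * M * (4 / Ω) := by
    have h' : |I₂| ≤ (2 * K * M * (4 / Ω)) / (1 + t ^ 2) := hI2b.trans_eq (by ring)
    have h'' := (le_div_iff₀ hP0).1 h'
    calc (1 + t ^ 2) * |I₂| = |I₂| * (1 + t ^ 2) := by ring
      _ ≤ _ := h''
  have h1 := mul_le_mul_of_nonneg_left habs hP0.le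
  have h2 : (1 + t ^ 2) * (Real.exp (-Ω * t) * (|a₀| + (1 / (2 * Ω)) * |I₁|)
        + (1 / (2 * Ω)) * |I₂|)
      = ((1 + t ^ 2) * Real.exp (-Ω * t)) * (|a₀| + (1 / (2 * Ω)) * |I₁|)
        + (1 / (2 * Ω)) * ((1 + t ^ 2) * |I₂|) := by ring
  have h3 : ((1 + t ^ 2) * Real.exp (-Ω * t)) * (|a₀| + (1 / (2 * Ω)) * |I₁|)
      ≤ B * (|a₀| + (1 / (2 * Ω)) * (K / Ω)) := by
    have hnn : (0:ℝ) ≤ |a₀| + (1 / (2 * Ω)) * |I₁| := by positivity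
    calc ((1 + t ^ 2) * Real.exp (-Ω * t)) * (|a₀| + (1 / (2 * Ω)) * |I₁|)
        ≤ B * (|a₀| + (1 / (2 * Ω)) * |I₁|) := mul_le_mul_of_nonneg_right hEP hnn
      _ ≤ B * (|a₀| + (1 / (2 * Ω)) * (K / Ω)) := by
          apply mul_le_mul_of_nonneg_left _ hB0.le
          have := mul_le_mul_of_nonneg_left hI1b hc0.le
          linarith
  have h4 : (1 / (2 * Ω)) * ((1 + t ^ 2) * |I₂|) ≤ (1 / (2 * Ω)) * (2 * K * M * (4 / Ω)) :=
    mul_le_mul_of_nonneg_left hPI2 hc0.le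
  have h5 : B * (|a₀| + (1 / (2 * Ω)) * (K / Ω)) + (1 / (2 * Ω)) * (2 * K * M * (4 / Ω))
      ≤ (B * (1 + 1 / (2 * Ω ^ 2)) + (2 / Ω) * (4 / Ω) * M) * (|a₀| + K) := by
    have e1 : (1 / (2 * Ω)) * (K / Ω) = K * (1 / (2 * Ω ^ 2)) := by
      field_simp
    have e2 : (1 / (2 * Ω)) * (2 * K * M * (4 / Ω)) = K * ((2 / Ω) * (4 / Ω) * M) / 2 := by
      field_simp
    rw [e1, e2]
    have hq1 : (0:ℝ) ≤ 1 / (2 * Ω ^ 2) := by positivity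
    have hq2 : (0:ℝ) ≤ (2 / Ω) * (4 / Ω) * M := by positivity
    have ha0 : (0:ℝ) ≤ |a₀| := abs_nonneg _
    nlinarith [mul_nonneg hB0.le ha0, mul_nonneg hB0.le hK, mul_nonneg hq1 ha0,
      mul_nonneg hq2 ha0, mul_nonneg hq1 hK, mul_nonneg hq2 hK,
      mul_nonneg (mul_nonneg hB0.le hq1) ha0, mul_nonneg (mul_nonneg hB0.le hq1) hK]
  calc (1 + t ^ 2) * |Real.exp (-Ω * t) * (a₀ + (1 / (2 * Ω)) * I₁) - (1 / (2 * Ω)) * I₂|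
      ≤ (1 + t ^ 2) * (Real.exp (-Ω * t) * (|a₀| + (1 / (2 * Ω)) * |I₁|)
          + (1 / (2 * Ω)) * |I₂|) := h1
    _ = ((1 + t ^ 2) * Real.exp (-Ω * t)) * (|a₀| + (1 / (2 * Ω)) * |I₁|)
          + (1 / (2 * Ω)) * ((1 + t ^ 2) * |I₂|) := h2
    _ ≤ B * (|a₀| + (1 / (2 * Ω)) * (K / Ω)) + (1 / (2 * Ω)) * (2 * K * M * (4 / Ω)) :=
          add_le_add h3 h4
    _ ≤ _ := h5
end

section
/- Let γ > 0 and C_V ≥ 0, and let V : ℝ → ℝ be continuous with |V(x)| ≤ C_V e^{−γ|x|} for all x ∈ ℝ. Suppose m : ℝ × (ℝ∖{0}) → ℂ is bounded and satisfies, for every x ∈ ℝ and every k ≠ 0, the Volterra integral equation m(x,k) = 1 + ∫_x^∞ D_k(y−x) V(y) m(y,k) dy, where D_k(y) = (e^{2iky} − 1)/(2ik). Then there exists C ≥ 0 such that |m(x,k) − 1| ≤ C ⟨x⟩^{−12} ⟨k⟩^{−1} for all x ≥ −1 and k ≠ 0, and |m(x,k) − 1| ≤ C ⟨x⟩ ⟨k⟩^{−1}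 for all x ≤ 1 and k ≠ 0. -/
open MeasureTheory Set

/-- integral of `exp (-c*y)` over `Ioi x`. -/
lemma aux_int_exp {c : ℝ} (hc : 0 < c) (x : ℝ) :
    ∫ y in Ioi x, Real.exp (-c * y) = Real.exp (-c * x) / c := by
  have h := integral_comp_mul_left_Ioi (fun y => Real.exp (-y)) x hc
  rw [integral_exp_neg_Ioi] at h
  simp only [neg_mul] at h ⊢
  rw [h, smul_eq_mul]
  ring

lemma aux_integrable_exp_abs {c : ℝ} (hc : 0 < c) :
    Integrable (fun y : ℝ => Real.exp (-c * |y|)) := by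
  have h1 : IntegrableOn (fun y : ℝ => Real.exp (-c * |y|)) (Ioi 0) := by
    refine (exp_neg_integrableOn_Ioi 0 hc).congr_fun (fun y hy => ?_) measurableSet_Ioi
    rw [abs_of_pos hy]
  have h2 : IntegrableOn (fun y : ℝ => Real.exp (-c * |y|)) (Iic 0) := by
    rw [← Measure.map_neg_eq_self (volume : Measure ℝ)]
    have m : MeasurableEmbedding fun x : ℝ => -x := (Homeomorph.neg ℝ).measurableEmbedding
    rw [m.integrableOn_map_iff]
    simp_rw [Function.comp_def, abs_neg, neg_preimage, neg_Iic, neg_zero]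
    exact Iff.mpr integrableOn_Ici_iff_integrableOn_Ioi h1
  have h := h2.union h1
  rwa [Iic_union_Ioi, integrableOn_univ] at h

lemma aux_int_exp_abs {c : ℝ} (hc : 0 < c) :
    ∫ y : ℝ, Real.exp (-c * |y|) = 2 / c := by
  have h := integral_comp_abs (f := fun y => Real.exp (-c * y))
  rw [h, aux_int_exp hc 0]
  norm_num
  ring

/-- `‖exp(I s) - 1‖ ≤ 2`. -/
lemma aux_norm_exp_one (s : ℝ) : ‖Complex.exp (Complex.I * s) - 1‖ ≤ 2 := by
  have h : ‖Complex.exp (Complex.I * s)‖ = 1 := by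
    rw [Complex.norm_exp]
    simp
  calc ‖Complex.exp (Complex.I * s) - 1‖ ≤ ‖Complex.exp (Complex.I * s)‖ + ‖(1:ℂ)‖ :=
        norm_sub_le _ _
    _ ≤ 2 := by rw [h]; norm_num

/-- `‖exp(I s) - 1‖ ≤ 2|s|`. -/
lemma aux_norm_exp_lin (s : ℝ) : ‖Complex.exp (Complex.I * s) - 1‖ ≤ 2 * |s| := by
  have hn : ‖Complex.I * (s:ℂ)‖ = |s| := by
    rw [norm_mul, Complex.norm_I, one_mul, Complex.norm_real, Real.norm_eq_abs]
  rcases le_or_gt |s| 1 with h | h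
  · have := Complex.norm_exp_sub_one_le (x := Complex.I * s) (by rwa [hn])
    rw [hn] at this
    exact this
  · exact (aux_norm_exp_one s).trans (by nlinarith)

open Real

set_option maxHeartbeats 1000000 in
/-- Bounds on the modified Jost function: if `V` is continuous with
`|V(x)| ≤ C_V e^{−γ|x|}` and the bounded function `m(x,k)` solves the Volterra
equation `m(x,k) = 1 + ∫_x^∞ D_k(y−x) V(y) m(y,k) dy`, `D_k(y) = (e^{2iky}−1)/(2ik)`,
then `|m(x,k) − 1| ≤ C ⟨x⟩⁻¹² ⟨k⟩⁻¹` for `x ≥ −1` and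
`|m(x,k) − 1| ≤ C ⟨x⟩ ⟨k⟩⁻¹` for `x ≤ 1` (all `k ≠ 0`). -/
theorem stmt6 (γ CV : ℝ) (hγ : 0 < γ) (hCV : 0 ≤ CV)
    (V : ℝ → ℝ) (hVc : Continuous V)
    (hVb : ∀ x : ℝ, |V x| ≤ CV * Real.exp (-γ * |x|))
    (m : ℝ → ℝ → ℂ)
    (hm_bdd : ∃ M : ℝ, ∀ x k : ℝ, k ≠ 0 → ‖m x k‖ ≤ M)
    (hVolterra : ∀ x : ℝ, ∀ k : ℝ, k ≠ 0 →
      m x k = 1 + ∫ y in Set.Ioi x,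
        ((Complex.exp (2 * Complex.I * k * (y - x)) - 1) / (2 * Complex.I * k))
          * V y * m y k) :
    ∃ C : ℝ, 0 ≤ C ∧
      (∀ x : ℝ, -1 ≤ x → ∀ k : ℝ, k ≠ 0 →
        ‖m x k - 1‖ ≤ C * Real.sqrt (1 + x ^ 2) ^ (-(12 : ℝ)) * (Real.sqrt (1 + k ^ 2))⁻¹) ∧
      (∀ x : ℝ, x ≤ 1 → ∀ k : ℝ, k ≠ 0 →
        ‖m x k - 1‖ ≤ C * Real.sqrt (1 + x ^ 2) * (Real.sqrt (1 + k ^ 2))⁻¹) := by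
  obtain ⟨M₀, hM₀⟩ := hm_bdd
  set M : ℝ := max M₀ 0 with hMdef
  have hMn : 0 ≤ M := le_max_right _ _
  have hM : ∀ x k : ℝ, k ≠ 0 → ‖m x k‖ ≤ M := fun x k hk => (hM₀ x k hk).trans (le_max_left _ _)
  -- bound on V without absolute value
  have hVy : ∀ y : ℝ, |V y| ≤ CV * Real.exp (-γ * y) := by
    intro y
    refine (hVb y).trans (mul_le_mul_of_nonneg_left ?_ hCV)
    exact Real.exp_le_exp.2 (by nlinarith [le_abs_self y])
  -- basic norm splitting for the integrand
  have hsplit : ∀ (x y k : ℝ),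
      ‖((Complex.exp (2 * Complex.I * k * (y - x)) - 1) / (2 * Complex.I * k))
          * (V y : ℂ) * m y k‖
        = ‖(Complex.exp (2 * Complex.I * k * (y - x)) - 1) / (2 * Complex.I * k)‖
          * |V y| * ‖m y k‖ := by
    intro x y k
    rw [norm_mul, norm_mul, Complex.norm_real, Real.norm_eq_abs]
  -- rewrite of the exponent
  have hz : ∀ (x y k : ℝ), 2 * Complex.I * (k:ℂ) * ((y:ℂ) - (x:ℂ))
      = Complex.I * ((2 * k * (y - x) : ℝ) : ℂ) := by
    intro x y k; push_cast; ring
  have hden : ∀ k : ℝ, ‖2 * Complex.I * (k:ℂ)‖ = 2 * |k| := by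
    intro k
    rw [norm_mul, norm_mul, Complex.norm_I, Complex.norm_real, Real.norm_eq_abs]
    norm_num
  -- D bounds
  have Db1 : ∀ (x y k : ℝ), k ≠ 0 →
      ‖(Complex.exp (2 * Complex.I * k * ((y:ℂ) - (x:ℂ))) - 1) / (2 * Complex.I * k)‖
        ≤ |k|⁻¹ := by
    intro x y k hk
    have hk' : (0:ℝ) < |k| := abs_pos.2 hk
    rw [norm_div, hden, hz]
    rw [div_le_iff₀ (by positivity)]
    calc ‖Complex.exp (Complex.I * ((2 * k * (y - x) : ℝ):ℂ)) - 1‖ ≤ 2 :=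
          aux_norm_exp_one _
      _ = |k|⁻¹ * (2 * |k|) := by field_simp
  have Db2 : ∀ (x y k : ℝ), k ≠ 0 → x ≤ y →
      ‖(Complex.exp (2 * Complex.I * k * ((y:ℂ) - (x:ℂ))) - 1) / (2 * Complex.I * k)‖
        ≤ 2 * (y - x) := by
    intro x y k hk hxy
    have hk' : (0:ℝ) < |k| := abs_pos.2 hk
    rw [norm_div, hden, hz]
    rw [div_le_iff₀ (by positivity)]
    calc ‖Complex.exp (Complex.I * ((2 * k * (y - x) : ℝ):ℂ)) - 1‖
        ≤ 2 * |2 * k * (y - x)| := aux_norm_exp_lin _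
      _ = 2 * (y - x) * (2 * |k|) := by
          rw [abs_mul, abs_mul, abs_of_nonneg (by linarith : (0:ℝ) ≤ y - x)]
          norm_num; ring
  -- the key estimate from the Volterra equation
  have key : ∀ (x k : ℝ), k ≠ 0 → ∀ g : ℝ → ℝ, IntegrableOn g (Ioi x) volume →
      (∀ y : ℝ, x < y →
        ‖((Complex.exp (2 * Complex.I * k * ((y:ℂ) - (x:ℂ))) - 1) / (2 * Complex.I * k))
          * (V y : ℂ) * m y k‖ ≤ g y) →
      ‖m x k - 1‖ ≤ ∫ y in Ioi x, g y := by
    intro x k hk g hg hb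
    rw [hVolterra x k hk, add_sub_cancel_left]
    exact norm_integral_le_of_norm_le hg
      ((ae_restrict_iff' measurableSet_Ioi).2 (Filter.Eventually.of_forall fun y hy => hb y hy))
  -- pointwise key inequalities for exponential weights
  have hlin : ∀ t : ℝ, t ≤ 2 / γ * Real.exp (γ / 2 * t) := by
    intro t
    have h := Real.add_one_le_exp (γ / 2 * t)
    have h2 : γ / 2 * t ≤ Real.exp (γ / 2 * t) := by linarith
    calc t = 2 / γ * (γ / 2 * t) := by field_simp
      _ ≤ 2 / γ * Real.exp (γ / 2 * t) := by
          exact mul_le_mul_of_nonneg_left h2 (by positivity)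
  have prod3 : ∀ {a b c A B C : ℝ}, a ≤ A → b ≤ B → c ≤ C → 0 ≤ b → 0 ≤ c → 0 ≤ A → 0 ≤ B →
      a * b * c ≤ A * B * C := by
    intro a b c A B C hA hB hC hb hc hAn hBn
    exact mul_le_mul (mul_le_mul hA hB hb hAn) hC hc (mul_nonneg hAn hBn)
  -- R1
  have R1 : ∀ x k : ℝ, k ≠ 0 →
      ‖m x k - 1‖ ≤ (CV * M / γ * Real.exp (-γ * x)) / |k| := by
    intro x k hk
    have hk' : (0:ℝ) < |k| := abs_pos.2 hk
    have hInt : IntegrableOn (fun y => CV * M / |k| * Real.exp (-γ * y)) (Ioi x) volume :=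
      (exp_neg_integrableOn_Ioi x hγ).const_mul _
    have h := key x k hk _ hInt ?_
    · rw [integral_const_mul, aux_int_exp hγ] at h
      calc ‖m x k - 1‖ ≤ CV * M / |k| * (Real.exp (-γ * x) / γ) := h
        _ = (CV * M / γ * Real.exp (-γ * x)) / |k| := by ring
    · intro y hy
      rw [hsplit]
      calc _ ≤ |k|⁻¹ * (CV * Real.exp (-γ * y)) * M := by
            gcongr ?_ * ?_ * ?_
            · exact Db1 x y k hk
            · exact hVy y
            · exact hM y k hk
        _ = CV * M / |k| * Real.exp (-γ * y) := by ring
  -- R2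
  have R2 : ∀ x k : ℝ, k ≠ 0 →
      ‖m x k - 1‖ ≤ 8 * CV * M / γ ^ 2 * Real.exp (-γ * x) := by
    intro x k hk
    have hInt : IntegrableOn
        (fun y => 4 * CV * M / γ * Real.exp (-(γ/2) * x) * Real.exp (-(γ/2) * y))
        (Ioi x) volume :=
      (exp_neg_integrableOn_Ioi x (by positivity)).const_mul _
    have h := key x k hk _ hInt ?_
    · rw [integral_const_mul, aux_int_exp (half_pos hγ)] at h
      refine h.trans (le_of_eq ?_)
      have hee : Real.exp (-(γ/2) * x) * Real.exp (-(γ/2) * x) = Real.exp (-γ * x) := by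
        rw [← Real.exp_add]; congr 1; ring
      calc 4 * CV * M / γ * Real.exp (-(γ/2) * x) * (Real.exp (-(γ/2) * x) / (γ/2))
          = 8 * CV * M / γ ^ 2 * (Real.exp (-(γ/2) * x) * Real.exp (-(γ/2) * x)) := by
            field_simp; ring
        _ = 8 * CV * M / γ ^ 2 * Real.exp (-γ * x) := by rw [hee]
    · intro y hy
      rw [hsplit]
      have hcm : (0:ℝ) ≤ 2 * CV * M := by positivity
      calc _ ≤ (2 * (y - x)) * (CV * Real.exp (-γ * y)) * M := by
            refine prod3 (Db2 x y k hk hy.le) (hVy y) (hM y k hk) (abs_nonneg _)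
              (norm_nonneg _) (by linarith) (by positivity)
        _ = 2 * CV * M * ((y - x) * Real.exp (-γ * y)) := by ring
        _ ≤ 2 * CV * M * (2 / γ * Real.exp (γ / 2 * (y - x)) * Real.exp (-γ * y)) := by
            refine mul_le_mul_of_nonneg_left ?_ hcm
            exact mul_le_mul_of_nonneg_right (hlin (y - x)) (Real.exp_nonneg _)
        _ = 4 * CV * M / γ * Real.exp (-(γ/2) * x) * Real.exp (-(γ/2) * y) := by
            rw [mul_assoc (2 / γ), ← Real.exp_add]
            rw [show γ / 2 * (y - x) + -γ * y = (-(γ/2) * x) + (-(γ/2) * y) by ring,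
              Real.exp_add]
            ring
  -- R3
  have R3 : ∀ x k : ℝ, k ≠ 0 → ‖m x k - 1‖ ≤ (2 * CV * M / γ) / |k| := by
    intro x k hk
    have hk' : (0:ℝ) < |k| := abs_pos.2 hk
    have hIntR : Integrable (fun y : ℝ => CV * M / |k| * Real.exp (-γ * |y|)) :=
      (aux_integrable_exp_abs hγ).const_mul _
    have h := key x k hk _ hIntR.integrableOn ?_
    · refine h.trans ?_
      have h2 : ∫ y in Ioi x, CV * M / |k| * Real.exp (-γ * |y|)
          ≤ ∫ y : ℝ, CV * M / |k| * Real.exp (-γ * |y|) :=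
        setIntegral_le_integral hIntR (Filter.Eventually.of_forall fun y => by positivity)
      refine h2.trans ?_
      rw [integral_const_mul, aux_int_exp_abs hγ]
      rw [div_mul_div_comm]
      apply le_of_eq
      ring
    · intro y hy
      rw [hsplit]
      calc _ ≤ |k|⁻¹ * (CV * Real.exp (-γ * |y|)) * M := by
            gcongr ?_ * ?_ * ?_
            · exact Db1 x y k hk
            · exact hVb y
            · exact hM y k hk
        _ = CV * M / |k| * Real.exp (-γ * |y|) := by ring
  -- R4
  have R4 : ∀ x k : ℝ, k ≠ 0 →
      ‖m x k - 1‖ ≤ 8 * CV * M * (1 + 2 / γ) / γ * (1 + |x|) := by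
    intro x k hk
    have hIntR : Integrable
        (fun y : ℝ => 2 * CV * M * (1 + |x|) * (1 + 2 / γ) * Real.exp (-(γ/2) * |y|)) :=
      (aux_integrable_exp_abs (by positivity : (0:ℝ) < γ/2)).const_mul _
    have h := key x k hk _ hIntR.integrableOn ?_
    · refine h.trans ?_
      have h2 : ∫ y in Ioi x, 2 * CV * M * (1 + |x|) * (1 + 2 / γ) * Real.exp (-(γ/2) * |y|)
          ≤ ∫ y : ℝ, 2 * CV * M * (1 + |x|) * (1 + 2 / γ) * Real.exp (-(γ/2) * |y|) := by
        refine setIntegral_le_integral hIntR (Filter.Eventually.of_forall fun y => ?_)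
        have hx0 : (0:ℝ) ≤ 1 + |x| := by positivity
        have : (0:ℝ) ≤ 1 + 2 / γ := by positivity
        positivity
      refine h2.trans ?_
      rw [integral_const_mul, aux_int_exp_abs (by positivity : (0:ℝ) < γ/2)]
      apply le_of_eq
      field_simp
      ring
    · intro y hy
      rw [hsplit]
      have hyx : y - x ≤ (1 + |x|) * (1 + |y|) := by
        nlinarith [le_abs_self y, neg_abs_le x, abs_nonneg x, abs_nonneg y]
      have hwt : (1 + |y|) * Real.exp (-γ * |y|) ≤ (1 + 2 / γ) * Real.exp (-(γ/2) * |y|) := by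
        have h1 : |y| ≤ 2 / γ * Real.exp (γ / 2 * |y|) := hlin |y|
        have h2 : (1:ℝ) ≤ Real.exp (γ / 2 * |y|) := Real.one_le_exp (by positivity)
        have h3 : 1 + |y| ≤ (1 + 2 / γ) * Real.exp (γ / 2 * |y|) := by nlinarith
        calc (1 + |y|) * Real.exp (-γ * |y|)
            ≤ (1 + 2 / γ) * Real.exp (γ / 2 * |y|) * Real.exp (-γ * |y|) :=
              mul_le_mul_of_nonneg_right h3 (Real.exp_nonneg _)
          _ = (1 + 2 / γ) * Real.exp (-(γ/2) * |y|) := by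
              rw [mul_assoc, ← Real.exp_add]
              ring_nf
      have hcm : (0:ℝ) ≤ 2 * CV * M * (1 + |x|) := by positivity
      calc _ ≤ (2 * (y - x)) * (CV * Real.exp (-γ * |y|)) * M := by
            refine prod3 (Db2 x y k hk hy.le) (hVb y) (hM y k hk) (abs_nonneg _)
              (norm_nonneg _) (by linarith) (by positivity)
        _ ≤ (2 * ((1 + |x|) * (1 + |y|))) * (CV * Real.exp (-γ * |y|)) * M := by
            have hcv : (0:ℝ) ≤ CV * Real.exp (-γ * |y|) := by positivity
            refine mul_le_mul_of_nonneg_right (mul_le_mul_of_nonneg_right ?_ hcv) hMn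
            linarith
        _ = 2 * CV * M * (1 + |x|) * ((1 + |y|) * Real.exp (-γ * |y|)) := by ring
        _ ≤ 2 * CV * M * (1 + |x|) * ((1 + 2 / γ) * Real.exp (-(γ/2) * |y|)) :=
            mul_le_mul_of_nonneg_left hwt hcm
        _ = 2 * CV * M * (1 + |x|) * (1 + 2 / γ) * Real.exp (-(γ/2) * |y|) := by ring
  -- combination lemma
  have comb : ∀ (v a b k : ℝ), k ≠ 0 → 0 ≤ v → v ≤ a / |k| → v ≤ b →
      v ≤ 2 * (a + b) * (Real.sqrt (1 + k ^ 2))⁻¹ := by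
    intro v a b k hk hv h1 h2
    have hk' : (0:ℝ) < |k| := abs_pos.2 hk
    have ha : 0 ≤ a := by
      rcases div_nonneg_iff.1 (hv.trans h1) with ⟨h, _⟩ | ⟨_, h⟩
      · exact h
      · linarith
    have hb : 0 ≤ b := hv.trans h2
    have hsq : Real.sqrt (1 + k ^ 2) ≤ 1 + |k| := by
      have h := Real.sqrt_le_sqrt (show (1:ℝ) + k ^ 2 ≤ (1 + |k|) ^ 2 by
        nlinarith [abs_nonneg k, sq_abs k])
      rwa [Real.sqrt_sq (by positivity)] at h
    have hpos : 0 < Real.sqrt (1 + k ^ 2) := Real.sqrt_pos.2 (by positivity)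
    rw [← div_eq_mul_inv, le_div_iff₀ hpos]
    have hstep : v * Real.sqrt (1 + k ^ 2) ≤ v * (1 + |k|) :=
      mul_le_mul_of_nonneg_left hsq hv
    refine hstep.trans ?_
    rcases le_total (|k|) 1 with h | h
    · nlinarith
    · have h1' : v * |k| ≤ a := by rwa [← le_div_iff₀ hk']
      nlinarith [mul_le_mul_of_nonneg_left h hv]
  -- constants
  set A1 : ℝ := CV * M / γ with hA1
  set A2 : ℝ := 8 * CV * M / γ ^ 2 with hA2
  set A3 : ℝ := 2 * CV * M / γ with hA3
  set A4 : ℝ := 8 * CV * M * (1 + 2 / γ) / γ with hA4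
  have hA1n : 0 ≤ A1 := by positivity
  have hA2n : 0 ≤ A2 := by positivity
  have hA3n : 0 ≤ A3 := by positivity
  have hA4n : 0 ≤ A4 := by positivity
  set E : ℝ := (1 + 12 / γ) ^ 12 * Real.exp (2 * γ) with hE
  have hEn : 0 ≤ E := by positivity
  -- decay estimate: for x ≥ -1, exp(-γx) * (1+x²)^6 ≤ E
  have hdecay : ∀ x : ℝ, -1 ≤ x → Real.exp (-γ * x) * (1 + x ^ 2) ^ 6 ≤ E := by
    intro x hx
    have h1 : (1 + x ^ 2) ^ 6 ≤ (1 + |x|) ^ 12 := by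
      have hsq : (1:ℝ) + x ^ 2 ≤ (1 + |x|) ^ 2 := by nlinarith [abs_nonneg x, sq_abs x]
      calc (1 + x ^ 2) ^ 6 ≤ ((1 + |x|) ^ 2) ^ 6 :=
            pow_le_pow_left₀ (by positivity) hsq 6
        _ = (1 + |x|) ^ 12 := by ring
    have h2 : 1 + |x| ≤ (1 + 12 / γ) * Real.exp (γ / 12 * |x|) := by
      have ha : γ / 12 * |x| ≤ Real.exp (γ / 12 * |x|) := by
        linarith [Real.add_one_le_exp (γ / 12 * |x|)]
      have hb : (1:ℝ) ≤ Real.exp (γ / 12 * |x|) := Real.one_le_exp (by positivity)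
      have hc : |x| = 12 / γ * (γ / 12 * |x|) := by field_simp
      nlinarith [mul_le_mul_of_nonneg_left ha (by positivity : (0:ℝ) ≤ 12 / γ)]
    have h3 : (1 + |x|) ^ 12 ≤ (1 + 12 / γ) ^ 12 * Real.exp (γ * |x|) := by
      calc (1 + |x|) ^ 12 ≤ ((1 + 12 / γ) * Real.exp (γ / 12 * |x|)) ^ 12 :=
            pow_le_pow_left₀ (by positivity) h2 12
        _ = (1 + 12 / γ) ^ 12 * Real.exp (γ / 12 * |x|) ^ 12 := by rw [mul_pow]
        _ = (1 + 12 / γ) ^ 12 * Real.exp (γ * |x|) := by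
            rw [← Real.exp_nat_mul]
            congr 1
            push_cast
            ring
    have h4 : Real.exp (-γ * x) * Real.exp (γ * |x|) ≤ Real.exp (2 * γ) := by
      rw [← Real.exp_add]
      apply Real.exp_le_exp.2
      rcases le_total 0 x with h | h
      · rw [abs_of_nonneg h]; nlinarith
      · rw [abs_of_nonpos h]; nlinarith
    calc Real.exp (-γ * x) * (1 + x ^ 2) ^ 6
        ≤ Real.exp (-γ * x) * ((1 + 12 / γ) ^ 12 * Real.exp (γ * |x|)) := by
          refine mul_le_mul_of_nonneg_left (h1.trans h3) (Real.exp_nonneg _)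
      _ = (1 + 12 / γ) ^ 12 * (Real.exp (-γ * x) * Real.exp (γ * |x|)) := by ring
      _ ≤ (1 + 12 / γ) ^ 12 * Real.exp (2 * γ) :=
          mul_le_mul_of_nonneg_left h4 (by positivity)
      _ = E := rfl
  -- the final constant
  refine ⟨2 * (A1 + A2) * E + 4 * (A3 + A4), by positivity, ?_, ?_⟩
  · -- case x ≥ -1
    intro x hx k hk
    have hv : 0 ≤ ‖m x k - 1‖ := norm_nonneg _
    have hc := comb (‖m x k - 1‖) (A1 * Real.exp (-γ * x)) (A2 * Real.exp (-γ * x)) k hk hv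
      (R1 x k hk) (R2 x k hk)
    have hxpos : (0:ℝ) < (1 + x ^ 2) ^ 6 := by positivity
    have hrw : Real.sqrt (1 + x ^ 2) ^ (-(12:ℝ)) = ((1 + x ^ 2) ^ 6)⁻¹ := by
      rw [Real.rpow_neg (Real.sqrt_nonneg _)]
      congr 1
      rw [show ((12:ℝ)) = ((12:ℕ):ℝ) by norm_num, Real.rpow_natCast]
      rw [show (Real.sqrt (1 + x ^ 2)) ^ (12:ℕ) = ((Real.sqrt (1 + x ^ 2)) ^ 2) ^ 6 by ring]
      rw [Real.sq_sqrt (by positivity)]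
    rw [hrw]
    have hkpos : 0 < Real.sqrt (1 + k ^ 2) := Real.sqrt_pos.2 (by positivity)
    have hdec := hdecay x hx
    have hfac : 2 * (A1 * Real.exp (-γ * x) + A2 * Real.exp (-γ * x))
        ≤ (2 * (A1 + A2) * E + 4 * (A3 + A4)) * ((1 + x ^ 2) ^ 6)⁻¹ := by
      rw [← div_eq_mul_inv, le_div_iff₀ hxpos]
      have e1 : 2 * (A1 * Real.exp (-γ * x) + A2 * Real.exp (-γ * x)) * (1 + x ^ 2) ^ 6
          = 2 * (A1 + A2) * (Real.exp (-γ * x) * (1 + x ^ 2) ^ 6) := by ring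
      rw [e1]
      have key2 : 2 * (A1 + A2) * (Real.exp (-γ * x) * (1 + x ^ 2) ^ 6) ≤ 2 * (A1 + A2) * E :=
        mul_le_mul_of_nonneg_left hdec (by linarith)
      linarith
    calc ‖m x k - 1‖ ≤ 2 * (A1 * Real.exp (-γ * x) + A2 * Real.exp (-γ * x))
          * (Real.sqrt (1 + k ^ 2))⁻¹ := hc
      _ ≤ (2 * (A1 + A2) * E + 4 * (A3 + A4)) * ((1 + x ^ 2) ^ 6)⁻¹
          * (Real.sqrt (1 + k ^ 2))⁻¹ :=
          mul_le_mul_of_nonneg_right hfac (by positivity)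
  · -- case x ≤ 1
    intro x hx k hk
    have hv : 0 ≤ ‖m x k - 1‖ := norm_nonneg _
    have hc := comb (‖m x k - 1‖) A3 (A4 * (1 + |x|)) k hk hv (R3 x k hk) (R4 x k hk)
    have hxb : 1 + |x| ≤ 2 * Real.sqrt (1 + x ^ 2) := by
      have h1 : |x| ≤ Real.sqrt (1 + x ^ 2) := by
        rw [show |x| = Real.sqrt (x ^ 2) by rw [Real.sqrt_sq_eq_abs]]
        exact Real.sqrt_le_sqrt (by linarith)
      have h2 : (1:ℝ) ≤ Real.sqrt (1 + x ^ 2) := by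
        have h2' := Real.sqrt_le_sqrt (show (1:ℝ) ≤ 1 + x ^ 2 by nlinarith)
        rwa [Real.sqrt_one] at h2'
      linarith
    have hsx : 0 < Real.sqrt (1 + x ^ 2) := Real.sqrt_pos.2 (by positivity)
    have hfac : 2 * (A3 + A4 * (1 + |x|))
        ≤ (2 * (A1 + A2) * E + 4 * (A3 + A4)) * Real.sqrt (1 + x ^ 2) := by
      have hx1 : (1:ℝ) ≤ 1 + |x| := by linarith [abs_nonneg x]
      have step1 : 2 * (A3 + A4 * (1 + |x|)) ≤ 2 * (A3 + A4) * (1 + |x|) := by nlinarith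
      have step2 : 2 * (A3 + A4) * (1 + |x|) ≤ 2 * (A3 + A4) * (2 * Real.sqrt (1 + x ^ 2)) :=
        mul_le_mul_of_nonneg_left hxb (by positivity)
      have step3 : 2 * (A3 + A4) * (2 * Real.sqrt (1 + x ^ 2))
          ≤ (2 * (A1 + A2) * E + 4 * (A3 + A4)) * Real.sqrt (1 + x ^ 2) := by
        have : (0:ℝ) ≤ 2 * (A1 + A2) * E := by positivity
        nlinarith
      linarith
    calc ‖m x k - 1‖ ≤ 2 * (A3 + A4 * (1 + |x|)) * (Real.sqrt (1 + k ^ 2))⁻¹ := hc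
      _ ≤ (2 * (A1 + A2) * E + 4 * (A3 + A4)) * Real.sqrt (1 + x ^ 2)
          * (Real.sqrt (1 + k ^ 2))⁻¹ :=
          mul_le_mul_of_nonneg_right hfac (by positivity)
end

section
/- Fix s ∈ ℝ and signs ε₁, ε₂, ε₃, ε₄ ∈ {+1, −1}. Let f₁, f₂, f₃, f₄, b : ℝ → ℂ be Schwartz functions, and define 𝒯_b(f₁,f₂,f₃,f₄)(k) = ∫_{ℝ⁴} e^{isΦ(k,l,m,n,p)} (⟨l⟩⟨m⟩⟨n⟩⟨p⟩)^{−1} f₁(l) f₂(m) f₃(n) f₄(p) b(k − ε₁l − ε₂m − ε₃n − ε₄p) dl dm dn dp, where Φ(k,l,m,n,p) = ⟨k⟩ − ⟨l⟩ − ⟨m⟩ − ⟨n⟩ − ⟨p⟩. Then for every x ∈ ℝ, ∫_ℝ e^{ikx} e^{−is⟨k⟩} 𝒯_b(f₁,f₂,f₃,f₄)(k) dk = ( ∫_ℝ e^{iqx} b(q) dq ) · ∏_{j=1}^{4} ( ∫_ℝ e^{i ε_j l x} ⟨l⟩^{−1} e^{−is⟨l⟩} f_j(l) dl ). Up to Fourier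 normalization constants, this says the inverse Fourier transform of e^{−is⟨k⟩} 𝒯_b(f₁,…,f₄) equals 𝓕^{−1}[b](x) · ∏_j u_j(s, ε_j x), where u_j(s,·) = ⟨D⟩^{−1} e^{−is⟨D⟩} 𝓕^{−1} f_j. -/
open MeasureTheory

/-- Japanese bracket `⟨x⟩ = √(1+x²)`. -/
noncomputable def jb (x : ℝ) : ℝ := Real.sqrt (1 + x ^ 2)

/-- The phase `Φ(k,l,m,n,p) = ⟨k⟩ − ⟨l⟩ − ⟨m⟩ − ⟨n⟩ − ⟨p⟩`. -/
noncomputable def Phi (k l m n p : ℝ) : ℝ := jb k - jb l - jb m - jb n - jb p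

/-- The multilinear form `𝒯_b(f₁,f₂,f₃,f₄)(k)` arising from the singular part of
the quartic nonlinear spectral distribution. -/
noncomputable def Tform (s ε₁ ε₂ ε₃ ε₄ : ℝ) (b f₁ f₂ f₃ f₄ : ℝ → ℂ) (k : ℝ) : ℂ :=
  ∫ l : ℝ, ∫ m : ℝ, ∫ n : ℝ, ∫ p : ℝ,
    Complex.exp (Complex.I * s * Phi k l m n p) *
      (((jb l * jb m * jb n * jb p : ℝ)⁻¹ : ℝ) : ℂ) *
      f₁ l * f₂ m * f₃ n * f₄ p *
      b (k - ε₁ * l - ε₂ * m - ε₃ * n - ε₄ * p)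

lemma jb_pos (t : ℝ) : 0 < jb t := Real.sqrt_pos.2 (by positivity)

lemma jb_one_le (t : ℝ) : 1 ≤ jb t := by
  rw [show (1:ℝ) = Real.sqrt 1 by simp [Real.sqrt_one]]
  exact Real.sqrt_le_sqrt (by nlinarith)

lemma jb_neg (t : ℝ) : jb (-t) = jb t := by simp [jb]

lemma jb_continuous : Continuous jb :=
  Real.continuous_sqrt.comp (by continuity)

lemma integral_comp_sign {ε : ℝ} (hε : ε = 1 ∨ ε = -1) (f : ℝ → ℂ) :
    (∫ t : ℝ, f (ε * t)) = ∫ t : ℝ, f t := by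
  rcases hε with h | h <;> subst h
  · simp
  · simpa [neg_one_mul] using integral_neg_eq_self f (volume : Measure ℝ)

noncomputable def Gf (s ε x : ℝ) (f : ℝ → ℂ) (t : ℝ) : ℂ :=
  Complex.exp (Complex.I * ε * t * x) * (((jb t)⁻¹ : ℝ) : ℂ) *
    Complex.exp (-(Complex.I * s * jb t)) * f t

noncomputable def Bf (x : ℝ) (b : ℝ → ℂ) (q : ℝ) : ℂ :=
  Complex.exp (Complex.I * q * x) * b q

lemma norm_exp_I_mul (r : ℝ) : ‖Complex.exp (Complex.I * r)‖ = 1 := by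
  rw [show Complex.I * (r:ℂ) = (r:ℂ) * Complex.I by ring]
  simpa using Complex.abs_exp_ofReal_mul_I r

lemma cont_Gf (s ε x : ℝ) {f : ℝ → ℂ} (hf : Continuous f) :
    Continuous (Gf s ε x f) := by
  unfold Gf
  have h1 : Continuous fun t : ℝ => Complex.exp (Complex.I * ε * t * x) := by
    exact Complex.continuous_exp.comp (by continuity)
  have h2 : Continuous fun t : ℝ => (((jb t)⁻¹ : ℝ) : ℂ) :=
    Complex.continuous_ofReal.comp (jb_continuous.inv₀ fun t => (jb_pos t).ne')
  have h3 : Continuous fun t : ℝ => Complex.exp (-(Complex.I * s * jb t)) := by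
    refine Complex.continuous_exp.comp ?_
    refine Continuous.neg ?_
    exact (continuous_const.mul (Complex.continuous_ofReal.comp jb_continuous))
  exact ((h1.mul h2).mul h3).mul hf

lemma norm_Gf_le (s ε x : ℝ) (f : ℝ → ℂ) (t : ℝ) : ‖Gf s ε x f t‖ ≤ ‖f t‖ := by
  unfold Gf
  have e1 : ‖Complex.exp (Complex.I * ε * t * x)‖ = 1 := by
    rw [show (Complex.I * ε * t * x : ℂ) = Complex.I * ((ε * t * x : ℝ) : ℂ) by push_cast; ring]
    exact norm_exp_I_mul _
  have e2 : ‖Complex.exp (-(Complex.I * s * jb t))‖ = 1 := by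
    rw [show (-(Complex.I * s * jb t) : ℂ) = Complex.I * ((-(s * jb t) : ℝ) : ℂ) by push_cast; ring]
    exact norm_exp_I_mul _
  have e3 : ‖(((jb t)⁻¹ : ℝ) : ℂ)‖ ≤ 1 := by
    rw [Complex.norm_real, Real.norm_eq_abs, abs_of_nonneg (inv_nonneg.2 (jb_pos t).le)]
    exact inv_le_one_of_one_le₀ (jb_one_le t)
  calc ‖Complex.exp (Complex.I * ε * t * x) * (((jb t)⁻¹ : ℝ) : ℂ) *
        Complex.exp (-(Complex.I * s * jb t)) * f t‖
      = ‖Complex.exp (Complex.I * ε * t * x)‖ * ‖(((jb t)⁻¹ : ℝ) : ℂ)‖ *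
        ‖Complex.exp (-(Complex.I * s * jb t))‖ * ‖f t‖ := by
        simp [norm_mul]
    _ ≤ 1 * 1 * 1 * ‖f t‖ := by
        rw [e1, e2]
        gcongr
    _ = ‖f t‖ := by ring

lemma int_Gf (s ε x : ℝ) (f : SchwartzMap ℝ ℂ) : Integrable (Gf s ε x ⇑f) := by
  refine Integrable.mono' f.integrable.norm ((cont_Gf s ε x f.continuous).aestronglyMeasurable) ?_
  exact Filter.Eventually.of_forall (norm_Gf_le s ε x f)

lemma int_Bf (x : ℝ) (b : SchwartzMap ℝ ℂ) : Integrable (Bf x ⇑b) := by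
  have : Continuous (Bf x ⇑b) := by
    unfold Bf
    exact (Complex.continuous_exp.comp (by continuity)).mul b.continuous
  refine Integrable.mono' b.integrable.norm this.aestronglyMeasurable ?_
  refine Filter.Eventually.of_forall fun q => ?_
  unfold Bf
  rw [norm_mul, show (Complex.I * q * x : ℂ) = Complex.I * ((q * x : ℝ) : ℂ) by push_cast; ring,
    norm_exp_I_mul, one_mul]

noncomputable def Hf (s ε x : ℝ) (f : ℝ → ℂ) (t : ℝ) : ℂ := Gf s ε x f (ε * t)

lemma int_Hf (s x : ℝ) {ε : ℝ} (hε : ε = 1 ∨ ε = -1) (f : SchwartzMap ℝ ℂ) :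
    Integrable (Hf s ε x ⇑f) := by
  unfold Hf
  rcases hε with h | h <;> subst h
  · simpa using int_Gf s 1 x f
  · simpa [neg_one_mul] using (int_Gf s (-1) x f).comp_neg


open scoped Convolution

lemma layer (s x : ℝ) {ε : ℝ} (hε : ε = 1 ∨ ε = -1) (f : ℝ → ℂ) (C : ℝ → ℂ) (y : ℝ) :
    (Hf s ε x f ⋆[ContinuousLinearMap.mul ℂ ℂ] C) y = ∫ t, Gf s ε x f t * C (y - ε * t) := by
  have hsq : ∀ t : ℝ, ε * (ε * t) = t := by rcases hε with h | h <;> subst h <;> intro t <;> ring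
  calc (Hf s ε x f ⋆[ContinuousLinearMap.mul ℂ ℂ] C) y
      = ∫ t, Hf s ε x f t * C (y - t) := by
        simp [convolution_def, ContinuousLinearMap.mul_apply']
    _ = ∫ t, Hf s ε x f (ε * t) * C (y - ε * t) :=
        (integral_comp_sign hε fun t => Hf s ε x f t * C (y - t)).symm
    _ = ∫ t, Gf s ε x f t * C (y - ε * t) := by
        unfold Hf; simp only [hsq]

lemma inner_alg (s ε₁ ε₂ ε₃ ε₄ x k l m n p : ℝ) (f₁ f₂ f₃ f₄ b : ℝ → ℂ) :
    Complex.exp (Complex.I * k * x) * Complex.exp (-(Complex.I * s * jb k)) *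
      (Complex.exp (Complex.I * s * Phi k l m n p) *
        (((jb l * jb m * jb n * jb p : ℝ)⁻¹ : ℝ) : ℂ) *
        f₁ l * f₂ m * f₃ n * f₄ p *
        b (k - ε₁ * l - ε₂ * m - ε₃ * n - ε₄ * p))
    = Gf s ε₁ x f₁ l * (Gf s ε₂ x f₂ m * (Gf s ε₃ x f₃ n * (Gf s ε₄ x f₄ p *
        Bf x b (k - ε₁ * l - ε₂ * m - ε₃ * n - ε₄ * p)))) := by
  unfold Gf Bf Phi
  have e1 : Complex.exp (Complex.I * (s:ℂ) * ((jb k - jb l - jb m - jb n - jb p : ℝ) : ℂ))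
      = Complex.exp (Complex.I * s * jb k) * (Complex.exp (-(Complex.I * s * jb l)) *
        Complex.exp (-(Complex.I * s * jb m)) * Complex.exp (-(Complex.I * s * jb n)) *
        Complex.exp (-(Complex.I * s * jb p))) := by
    rw [← Complex.exp_add, ← Complex.exp_add, ← Complex.exp_add, ← Complex.exp_add]
    congr 1; push_cast; ring
  have e2 : Complex.exp (Complex.I * (k:ℂ) * (x:ℂ))
      = Complex.exp (Complex.I * ε₁ * l * x) * Complex.exp (Complex.I * ε₂ * m * x) *
        Complex.exp (Complex.I * ε₃ * n * x) * Complex.exp (Complex.I * ε₄ * p * x) *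
        Complex.exp (Complex.I * ((k - ε₁ * l - ε₂ * m - ε₃ * n - ε₄ * p : ℝ) : ℂ) * x) := by
    rw [← Complex.exp_add, ← Complex.exp_add, ← Complex.exp_add, ← Complex.exp_add]
    congr 1; push_cast; ring
  have e3 : (((jb l * jb m * jb n * jb p : ℝ)⁻¹ : ℝ) : ℂ)
      = (((jb l)⁻¹ : ℝ) : ℂ) * (((jb m)⁻¹ : ℝ) : ℂ) * (((jb n)⁻¹ : ℝ) : ℂ) *
        (((jb p)⁻¹ : ℝ) : ℂ) := by
    push_cast [mul_inv]; ring
  have e4 : Complex.exp (-(Complex.I * (s:ℂ) * ((jb k : ℝ) : ℂ))) *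
      Complex.exp (Complex.I * (s:ℂ) * ((jb k : ℝ) : ℂ)) = 1 := by
    rw [← Complex.exp_add]; simp
  rw [e2, e3, e1]
  linear_combination
    (Complex.exp (Complex.I * (ε₁:ℂ) * (l:ℂ) * (x:ℂ)) * (((jb l)⁻¹ : ℝ) : ℂ) *
        Complex.exp (-(Complex.I * (s:ℂ) * ((jb l : ℝ) : ℂ))) * f₁ l *
      (Complex.exp (Complex.I * (ε₂:ℂ) * (m:ℂ) * (x:ℂ)) * (((jb m)⁻¹ : ℝ) : ℂ) *
        Complex.exp (-(Complex.I * (s:ℂ) * ((jb m : ℝ) : ℂ))) * f₂ m) *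
      (Complex.exp (Complex.I * (ε₃:ℂ) * (n:ℂ) * (x:ℂ)) * (((jb n)⁻¹ : ℝ) : ℂ) *
        Complex.exp (-(Complex.I * (s:ℂ) * ((jb n : ℝ) : ℂ))) * f₃ n) *
      (Complex.exp (Complex.I * (ε₄:ℂ) * (p:ℂ) * (x:ℂ)) * (((jb p)⁻¹ : ℝ) : ℂ) *
        Complex.exp (-(Complex.I * (s:ℂ) * ((jb p : ℝ) : ℂ))) * f₄ p) *
      (Complex.exp (Complex.I * ((k - ε₁ * l - ε₂ * m - ε₃ * n - ε₄ * p : ℝ) : ℂ) * (x:ℂ)) *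
        b (k - ε₁ * l - ε₂ * m - ε₃ * n - ε₄ * p))) * e4



/-- Factorization of the inverse Fourier transform of `e^{−is⟨k⟩} 𝒯_b(f₁,…,f₄)`:
it equals `𝓕⁻¹[b](x) · ∏_j u_j(s, ε_j x)` with
`u_j(s,·) = ⟨D⟩⁻¹ e^{−is⟨D⟩} 𝓕⁻¹ f_j` (up to Fourier normalization constants). -/
theorem stmt14 (s ε₁ ε₂ ε₃ ε₄ : ℝ)
    (hε₁ : ε₁ = 1 ∨ ε₁ = -1) (hε₂ : ε₂ = 1 ∨ ε₂ = -1)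
    (hε₃ : ε₃ = 1 ∨ ε₃ = -1) (hε₄ : ε₄ = 1 ∨ ε₄ = -1)
    (f₁ f₂ f₃ f₄ b : SchwartzMap ℝ ℂ) :
    ∀ x : ℝ,
      (∫ k : ℝ, Complex.exp (Complex.I * k * x) *
          Complex.exp (-(Complex.I * s * jb k)) *
          Tform s ε₁ ε₂ ε₃ ε₄ ⇑b ⇑f₁ ⇑f₂ ⇑f₃ ⇑f₄ k)
        = (∫ q : ℝ, Complex.exp (Complex.I * q * x) * b q) *
          (∫ l : ℝ, Complex.exp (Complex.I * ε₁ * l * x) * (((jb l)⁻¹ : ℝ) : ℂ) *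
              Complex.exp (-(Complex.I * s * jb l)) * f₁ l) *
          (∫ m : ℝ, Complex.exp (Complex.I * ε₂ * m * x) * (((jb m)⁻¹ : ℝ) : ℂ) *
              Complex.exp (-(Complex.I * s * jb m)) * f₂ m) *
          (∫ n : ℝ, Complex.exp (Complex.I * ε₃ * n * x) * (((jb n)⁻¹ : ℝ) : ℂ) *
              Complex.exp (-(Complex.I * s * jb n)) * f₃ n) *
          (∫ p : ℝ, Complex.exp (Complex.I * ε₄ * p * x) * (((jb p)⁻¹ : ℝ) : ℂ) *
              Complex.exp (-(Complex.I * s * jb p)) * f₄ p) := by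
  intro x
  set L : ℂ →L[ℂ] ℂ →L[ℂ] ℂ := ContinuousLinearMap.mul ℂ ℂ with hL
  have iB : Integrable (Bf x ⇑b) := int_Bf x b
  have iH1 : Integrable (Hf s ε₁ x ⇑f₁) := int_Hf s x hε₁ f₁
  have iH2 : Integrable (Hf s ε₂ x ⇑f₂) := int_Hf s x hε₂ f₂
  have iH3 : Integrable (Hf s ε₃ x ⇑f₃) := int_Hf s x hε₃ f₃
  have iH4 : Integrable (Hf s ε₄ x ⇑f₄) := int_Hf s x hε₄ f₄
  have iC4 : Integrable (Hf s ε₄ x ⇑f₄ ⋆[L] Bf x ⇑b) := iH4.integrable_convolution L iB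
  have iC3 : Integrable (Hf s ε₃ x ⇑f₃ ⋆[L] (Hf s ε₄ x ⇑f₄ ⋆[L] Bf x ⇑b)) :=
    iH3.integrable_convolution L iC4
  have iC2 : Integrable
      (Hf s ε₂ x ⇑f₂ ⋆[L] (Hf s ε₃ x ⇑f₃ ⋆[L] (Hf s ε₄ x ⇑f₄ ⋆[L] Bf x ⇑b))) :=
    iH2.integrable_convolution L iC3
  have key : ∀ k : ℝ,
      Complex.exp (Complex.I * k * x) * Complex.exp (-(Complex.I * s * jb k)) *
        Tform s ε₁ ε₂ ε₃ ε₄ ⇑b ⇑f₁ ⇑f₂ ⇑f₃ ⇑f₄ k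
      = (Hf s ε₁ x ⇑f₁ ⋆[L]
          (Hf s ε₂ x ⇑f₂ ⋆[L] (Hf s ε₃ x ⇑f₃ ⋆[L] (Hf s ε₄ x ⇑f₄ ⋆[L] Bf x ⇑b)))) k := by
    intro k
    simp only [hL, layer s x hε₁ ⇑f₁, layer s x hε₂ ⇑f₂, layer s x hε₃ ⇑f₃,
      layer s x hε₄ ⇑f₄, Tform]
    simp only [← integral_const_mul]
    refine integral_congr_ae (Filter.Eventually.of_forall fun l => ?_)
    refine integral_congr_ae (Filter.Eventually.of_forall fun m => ?_)
    refine integral_congr_ae (Filter.Eventually.of_forall fun n => ?_)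
    refine integral_congr_ae (Filter.Eventually.of_forall fun p => ?_)
    exact inner_alg s ε₁ ε₂ ε₃ ε₄ x k l m n p ⇑f₁ ⇑f₂ ⇑f₃ ⇑f₄ ⇑b
  have hsplit : ∀ {ε : ℝ} (hε : ε = 1 ∨ ε = -1) (f : ℝ → ℂ),
      (∫ t, Hf s ε x f t) = ∫ t, Gf s ε x f t := by
    intro ε hε f
    exact integral_comp_sign hε (Gf s ε x f)
  calc (∫ k : ℝ, Complex.exp (Complex.I * k * x) *
          Complex.exp (-(Complex.I * s * jb k)) *
          Tform s ε₁ ε₂ ε₃ ε₄ ⇑b ⇑f₁ ⇑f₂ ⇑f₃ ⇑f₄ k)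
      = ∫ k, (Hf s ε₁ x ⇑f₁ ⋆[L]
          (Hf s ε₂ x ⇑f₂ ⋆[L] (Hf s ε₃ x ⇑f₃ ⋆[L] (Hf s ε₄ x ⇑f₄ ⋆[L] Bf x ⇑b)))) k :=
        integral_congr_ae (Filter.Eventually.of_forall key)
    _ = (∫ t, Hf s ε₁ x ⇑f₁ t) * ((∫ t, Hf s ε₂ x ⇑f₂ t) * ((∫ t, Hf s ε₃ x ⇑f₃ t) *
          ((∫ t, Hf s ε₄ x ⇑f₄ t) * (∫ q, Bf x ⇑b q)))) := by
        rw [integral_convolution L iH1 iC2, integral_convolution L iH2 iC3,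
          integral_convolution L iH3 iC4, integral_convolution L iH4 iB]
        simp [hL, ContinuousLinearMap.mul_apply']
    _ = _ := by
        rw [hsplit hε₁ ⇑f₁, hsplit hε₂ ⇑f₂, hsplit hε₃ ⇑f₃, hsplit hε₄ ⇑f₄]
        simp only [Gf, Bf]
        ring
end
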